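/- arXiv:2602.07868 — 7 statements merged into one kernel-verified Lean document; each statement's English description precedes it below -/
import Mathlib

section
/- Let T be a finite tree with n vertices and let s be an integer with 1 ≤ s ≤ n and s ≤ n. Then T can be partitioned into edge-disjoint subtrees T₁, ..., T_p such that every edge of T belongs to exactly one subtree and each subtree T_j has between s and 3s − 1 vertices. -/
open SimpleGraph

set_option linter.unusedSectionVars false

namespace TreePartitionAux

/-- Reachability within a vertex set `D`, via walks in `G` whose support stays in `D`. -/
def ReachIn {V : Type*} (G : SimpleGraph V) (D : Set V) (x y : V) : Prop :=
  ∃ p : G.Walk x y, ∀ z ∈ p.support, z ∈ D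

variable {V : Type*} [DecidableEq V] {G : SimpleGraph V}

lemma ReachIn.mem_left {D : Set V} {x y : V} (h : ReachIn G D x y) : x ∈ D := by
  obtain ⟨p, hp⟩ := h; exact hp x p.start_mem_support

lemma ReachIn.mem_right {D : Set V} {x y : V} (h : ReachIn G D x y) : y ∈ D := by
  obtain ⟨p, hp⟩ := h; exact hp y p.end_mem_support

lemma ReachIn.refl {D : Set V} {x : V} (hx : x ∈ D) : ReachIn G D x x :=
  ⟨Walk.nil, by simpa using hx⟩

lemma ReachIn.symm {D : Set V} {x y : V} (h : ReachIn G D x y) : ReachIn G D y x := by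
  obtain ⟨p, hp⟩ := h
  exact ⟨p.reverse, fun z hz => hp z (by simpa [Walk.support_reverse] using hz)⟩

lemma ReachIn.trans {D : Set V} {x y z : V} (h : ReachIn G D x y) (h' : ReachIn G D y z) :
    ReachIn G D x z := by
  obtain ⟨p, hp⟩ := h; obtain ⟨q, hq⟩ := h'
  refine ⟨p.append q, fun w hw => ?_⟩
  rcases (Walk.mem_support_append_iff _ _).1 hw with h | h
  · exact hp w h
  · exact hq w h

lemma ReachIn.mono {D D' : Set V} (hDD : D ⊆ D') {x y : V} (h : ReachIn G D x y) :
    ReachIn G D' x y := by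
  obtain ⟨p, hp⟩ := h; exact ⟨p, fun z hz => hDD (hp z hz)⟩

lemma ReachIn.adj_extend {D : Set V} {w x y : V} (h : ReachIn G D w x) (hadj : G.Adj x y)
    (hy : y ∈ D) : ReachIn G D w y :=
  h.trans ⟨Walk.cons hadj Walk.nil, by simp [h.mem_right, hy]⟩

lemma reachable_induce_of_walk {D : Set V} :
    ∀ {x y : V} (p : G.Walk x y), (∀ z ∈ p.support, z ∈ D) →
      ∀ (hx : x ∈ D) (hy : y ∈ D), (G.induce D).Reachable ⟨x, hx⟩ ⟨y, hy⟩ := by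
  intro x y p
  induction p with
  | nil => intro _ hx hy; exact Reachable.refl _
  | @cons a b c h q ih =>
    intro hsup hx hy
    have hb : b ∈ D := hsup b (by simp)
    have hadj : (G.induce D).Adj ⟨a, hx⟩ ⟨b, hb⟩ := h
    exact hadj.reachable.trans (ih (fun z hz => hsup z (by simp [hz])) hb hy)

lemma connected_induce_of_reachIn {D : Set V} {v : V} (hv : v ∈ D)
    (h : ∀ x ∈ D, ReachIn G D v x) : (G.induce D).Connected := by
  rw [connected_iff]
  refine ⟨fun ⟨x, hx⟩ ⟨y, hy⟩ => ?_, ⟨⟨v, hv⟩⟩⟩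
  obtain ⟨p, hp⟩ := (h x hx).symm.trans (h y hy)
  exact reachable_induce_of_walk p hp hx hy

lemma trap {S C : Set V} {v : V}
    (hcl : ∀ a b, a ∈ C → b ∈ S → b ≠ v → G.Adj a b → b ∈ C) :
    ∀ {a b : V} (q : G.Walk a b), (∀ z ∈ q.support, z ∈ S) → a ∈ C → v ∉ q.support → b ∈ C := by
  intro a b q
  induction q with
  | nil => intro _ ha _; exact ha
  | @cons a c b h q ih =>
    intro hsup ha hv
    have hc : c ∈ S := hsup c (by simp)
    have hcv : c ≠ v := by rintro rfl; exact hv (by simp)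
    exact ih (fun z hz => hsup z (by simp [hz])) (hcl a c ha hc hcv h)
      (fun hvmem => hv (by simp [hvmem]))


lemma reach_avoid {S C : Set V} {v x : V}
    (hcl : ∀ a b, a ∈ C → b ∈ S → b ≠ v → G.Adj a b → b ∈ C)
    (hvC : v ∉ C) (hx : x ∉ C) (h : ReachIn G S v x) :
    ReachIn G (S \ C) v x := by
  obtain ⟨p, hp⟩ := h
  have hvmem : v ∈ p.reverse.support := by
    simp [Walk.support_reverse]
  set t : G.Walk x v := p.reverse.takeUntil v hvmem with ht
  have htsup : ∀ z ∈ t.support, z ∈ S := fun z hz =>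
    hp z (by simpa [Walk.support_reverse] using p.reverse.support_takeUntil_subset hvmem hz)
  have hcount : t.support.count v = 1 := p.reverse.count_support_takeUntil_eq_one hvmem
  refine ⟨t.reverse, fun z hz => ?_⟩
  have hzsup : z ∈ t.support := by simpa [Walk.support_reverse] using hz
  refine ⟨htsup z hzsup, fun hzC => ?_⟩
  have hzv : z ≠ v := fun e => hvC (e ▸ hzC)
  have hz' : z ∈ t.reverse.support := hz
  -- the suffix of `t.reverse` from `z` to `x`
  have hvdrop : v ∉ (t.reverse.dropUntil z hz').support := by
    intro hvd
    have hsplit := t.reverse.take_spec hz'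
    have h1 : v ∈ (t.reverse.takeUntil z hz').support := Walk.start_mem_support _
    have h2 : v ∈ (t.reverse.dropUntil z hz').support.tail := by
      have hcons := Walk.support_eq_cons (t.reverse.dropUntil z hz')
      rw [hcons, List.mem_cons] at hvd
      rcases hvd with h | h
      · exact absurd h hzv.symm
      · exact h
    have hcount' : t.reverse.support.count v = 1 := by
      rw [Walk.support_reverse, List.count_reverse]; exact hcount
    have : 2 ≤ t.reverse.support.count v := by
      rw [← hsplit, Walk.support_append, List.count_append]
      have c1 : 0 < ((t.reverse.takeUntil z hz').support.count v) := List.count_pos_iff.2 h1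
      have c2 : 0 < ((t.reverse.dropUntil z hz').support.tail.count v) := List.count_pos_iff.2 h2
      omega
    omega
  have hdropsup : ∀ w ∈ (t.reverse.dropUntil z hz').support, w ∈ S := fun w hw =>
    htsup w (by simpa [Walk.support_reverse] using t.reverse.support_dropUntil_subset hz' hw)
  exact hx (trap hcl (t.reverse.dropUntil z hz') hdropsup hzC hvdrop)


/-- `A` is a pendant subtree of `S` attached at `v`:  connected, and all edges of `G`
leaving `A` within `S` leave from `v`. -/
structure Pend (G : SimpleGraph V) (S A : Set V) (v : V) : Prop where
  subset : A ⊆ S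
  mem : v ∈ A
  conn : ∀ x ∈ A, ReachIn G A v x
  closed : ∀ x y, x ∈ A → x ≠ v → y ∈ S → G.Adj x y → y ∈ A

lemma pendant_shrink [Fintype V] (hG : G.IsTree) (s : ℕ) (hs : 1 ≤ s) :
    ∀ (m : ℕ) (S A : Set V) (v : V), A.ncard ≤ m → Pend G S A v → s ≤ A.ncard →
    ∃ A' v', Pend G S A' v' ∧ A' ⊆ A ∧ s ≤ A'.ncard ∧ A'.ncard ≤ 2 * s - 1 := by
  intro m
  induction m with
  | zero =>
    intro S A v hm hP hs'
    exfalso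
    have : 0 < A.ncard := (Set.ncard_pos (Set.toFinite A)).2 ⟨v, hP.mem⟩
    omega
  | succ m ih =>
    intro S A v hm hP hsA
    by_cases hsmall : A.ncard ≤ 2 * s - 1
    · exact ⟨A, v, hP, subset_rfl, hsA, hsmall⟩
    push_neg at hsmall
    have hbig : 2 * s ≤ A.ncard := by omega
    have hA2 : 1 < A.ncard := by omega
    -- find a neighbour w of v inside A
    obtain ⟨x0, hx0A, hx0v⟩ := Set.exists_ne_of_one_lt_ncard hA2 v
    obtain ⟨p, hp⟩ := hP.conn x0 hx0A
    obtain ⟨w, hvw, hwsup⟩ : ∃ w, G.Adj v w ∧ w ∈ p.support := by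
      cases p with
      | nil => exact absurd rfl hx0v.symm
      | cons h q => exact ⟨_, h, by simp⟩
    have hwA : w ∈ A := hp w hwsup
    have hwv : w ≠ v := hvw.ne'
    set A₀ : Set V := A \ {v} with hA₀
    have hwA₀ : w ∈ A₀ := ⟨hwA, hwv⟩
    set C : Set V := {z | ReachIn G A₀ w z} with hC
    have hCsub : C ⊆ A₀ := fun z hz => hz.mem_right
    have hwC : w ∈ C := ReachIn.refl hwA₀
    have hvC : v ∉ C := fun h => (hCsub h).2 rfl
    -- (F1) C is closed under edges within A₀
    have F1 : ∀ a b, a ∈ C → b ∈ A₀ → G.Adj a b → b ∈ C := fun a b ha hb hadj =>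
      ha.adj_extend hadj hb
    -- (F3) the only vertex of C adjacent to v is w
    have F3 : ∀ a ∈ C, G.Adj a v → a = w := by
      intro a haC hav
      by_contra haw
      obtain ⟨q, hq⟩ := haC
      have hvq : v ∉ q.toPath.1.support := fun h =>
        (hq v (q.support_toPath_subset h)).2 rfl
      have hp1 : (Walk.cons hvw q.toPath.1).IsPath := q.toPath.2.cons hvq
      have hp2 : (Walk.cons (hav.symm) (Walk.nil : G.Walk a a)).IsPath := by
        simp [Walk.isPath_iff_eq_nil, hav.ne']
      have := (hG.existsUnique_path v a).unique hp1 hp2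
      have hwmem : w ∈ (Walk.cons (hav.symm) (Walk.nil : G.Walk a a)).support := by
        rw [← this]; simp
      simp only [Walk.support_cons, Walk.support_nil, List.mem_cons, List.mem_singleton] at hwmem
      rcases hwmem with h | h | h
      · exact hwv h
      · exact haw h.symm
      · simp at h
    -- C is connected from w
    have hCconn : ∀ z ∈ C, ReachIn G C w z := by
      intro z hz
      obtain ⟨q, hq⟩ := hz
      refine ⟨q, fun u hu => ?_⟩
      exact ⟨q.takeUntil u hu, fun r hr => hq r (q.support_takeUntil_subset hu hr)⟩
    by_cases hCbig : s ≤ C.ncard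
    · -- recurse into C, pendant at w
      have hPC : Pend G S C w := by
        refine ⟨fun z hz => hP.subset (hCsub hz).1, hwC, hCconn, ?_⟩
        intro a b haC haw hbS hadj
        have hbA : b ∈ A := hP.closed a b (hCsub haC).1 (hCsub haC).2 hbS hadj
        by_cases hbv : b = v
        · exact absurd (F3 a haC (hbv ▸ hadj)) haw
        · exact F1 a b haC ⟨hbA, hbv⟩ hadj
      have hCle : C.ncard ≤ m := by
        have h1 : C.ncard ≤ A₀.ncard := Set.ncard_le_ncard hCsub (Set.toFinite _)
        have h2 : A₀.ncard = A.ncard - 1 := Set.ncard_diff_singleton_of_mem hP.mem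
        omega
      obtain ⟨A', v', hP', hsub', h1', h2'⟩ := ih S C w hCle hPC hCbig
      exact ⟨A', v', hP', hsub'.trans (hCsub.trans Set.diff_subset), h1', h2'⟩
    · -- remove C from A, still pendant at v
      push_neg at hCbig
      set A'' : Set V := A \ C with hA''
      have hvA'' : v ∈ A'' := ⟨hP.mem, hvC⟩
      have hCsubA : C ⊆ A := hCsub.trans Set.diff_subset
      have hcard : A''.ncard = A.ncard - C.ncard := Set.ncard_diff hCsubA (Set.toFinite _)
      have hCpos : 0 < C.ncard := (Set.ncard_pos (Set.toFinite C)).2 ⟨w, hwC⟩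
      have hPA'' : Pend G S A'' v := by
        refine ⟨fun z hz => hP.subset hz.1, hvA'', ?_, ?_⟩
        · intro z hz
          have : ReachIn G (A \ C) v z :=
            reach_avoid (fun a b ha hb hbv hadj => F1 a b ha ⟨hb, hbv⟩ hadj) hvC hz.2
              (hP.conn z hz.1)
          exact this
        · intro a b ha hav hbS hadj
          have hbA : b ∈ A := hP.closed a b ha.1 hav hbS hadj
          refine ⟨hbA, fun hbC => ha.2 ?_⟩
          exact F1 b a hbC ⟨ha.1, hav⟩ hadj.symm
      have h1 : s ≤ A''.ncard := by omega
      have h2 : A''.ncard ≤ m := by omega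
      obtain ⟨A', v', hP', hsub', h1', h2'⟩ := ih S A'' v h2 hPA'' h1
      exact ⟨A', v', hP', hsub'.trans Set.diff_subset, h1', h2'⟩


lemma partition_aux [Fintype V] (hG : G.IsTree) (s : ℕ) (hs : 2 ≤ s) :
    ∀ (m : ℕ) (S : Set V), S.ncard ≤ m → (∃ v ∈ S, ∀ x ∈ S, ReachIn G S v x) →
      s ≤ S.ncard →
    ∃ (p : ℕ) (A : Fin p → Set V),
      (∀ j, ∃ v ∈ A j, ∀ x ∈ A j, ReachIn G (A j) v x) ∧
      (∀ j, A j ⊆ S) ∧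
      (∀ j, s ≤ (A j).ncard ∧ (A j).ncard < 3 * s) ∧
      (∀ x y, G.Adj x y → x ∈ S → y ∈ S → ∃! j, x ∈ A j ∧ y ∈ A j) := by
  intro m
  induction m with
  | zero => intro S hm _ hsS; exfalso; omega
  | succ m ih =>
    intro S hm hSconn hsS
    obtain ⟨v₀, hv₀S, hSconn⟩ := hSconn
    by_cases hsmall : S.ncard < 3 * s
    · -- single part
      refine ⟨1, fun _ => S, fun _ => ⟨v₀, hv₀S, hSconn⟩, fun _ => subset_rfl,
        fun _ => ⟨hsS, hsmall⟩, fun x y _ hx hy => ⟨0, ⟨hx, hy⟩, fun j _ => Subsingleton.elim _ _⟩⟩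
    push_neg at hsmall
    -- split off a pendant subtree A with s ≤ |A| ≤ 2s-1
    have hPS : Pend G S S v₀ := ⟨subset_rfl, hv₀S, hSconn, fun _ y _ _ hy _ => hy⟩
    obtain ⟨A, v, hPA, hAS, hA1, hA2⟩ :=
      pendant_shrink hG s (by omega) S.ncard S S v₀ le_rfl hPS (by omega)
    have hvA : v ∈ A := hPA.mem
    have hvS : v ∈ S := hPA.subset hvA
    set B : Set V := S \ (A \ {v}) with hB
    have hBsub : B ⊆ S := Set.diff_subset
    have hvB : v ∈ B := ⟨hvS, fun h => h.2 rfl⟩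
    have hBconn : ∀ x ∈ B, ReachIn G B v x := by
      intro x hx
      exact reach_avoid
        (fun a b ha hb hbv hadj => ⟨hPA.closed a b ha.1 ha.2 hb hadj, hbv⟩)
        (fun h => h.2 rfl) hx.2 ((hSconn v hvS).symm.trans (hSconn x hx.1))
    have hcardA0 : (A \ {v}).ncard = A.ncard - 1 :=
      Set.ncard_diff_singleton_of_mem hvA
    have hA0S : (A \ {v}) ⊆ S := fun z hz => hPA.subset hz.1
    have hcardB : B.ncard = S.ncard - (A.ncard - 1) := by
      rw [hB, Set.ncard_diff hA0S (Set.toFinite _), hcardA0]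
    have hA0le : (A \ {v}).ncard ≤ S.ncard := Set.ncard_le_ncard hA0S (Set.toFinite _)
    have hBs : s ≤ B.ncard := by omega
    have hBm : B.ncard ≤ m := by omega
    obtain ⟨p', A', hconn', hsub', hsz', hedge'⟩ := ih B hBm ⟨v, hvB, hBconn⟩ hBs
    refine ⟨p' + 1, Fin.cons A A', ?_, ?_, ?_, ?_⟩
    · intro j
      refine Fin.cases ?_ ?_ j
      · exact ⟨v, hvA, hPA.conn⟩
      · intro i; exact hconn' i
    · intro j
      refine Fin.cases ?_ ?_ j
      · exact hAS
      · intro i; exact (hsub' i).trans hBsub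
    · intro j
      rcases Fin.eq_zero_or_eq_succ j with rfl | ⟨i, rfl⟩
      · simp only [Fin.cons_zero]; exact ⟨hA1, by omega⟩
      · simp only [Fin.cons_succ]; exact hsz' i
    · intro x y hadj hxS hyS
      by_cases hxA : x ∈ A \ {v}
      · have hyA : y ∈ A := hPA.closed x y hxA.1 hxA.2 hyS hadj
        refine ⟨0, ⟨hxA.1, hyA⟩, fun j hj => ?_⟩
        rcases Fin.eq_zero_or_eq_succ j with rfl | ⟨i, rfl⟩
        · rfl
        · simp only [Fin.cons_succ] at hj
          exact absurd hxA (hsub' i hj.1).2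
      by_cases hyA : y ∈ A \ {v}
      · have hxA' : x ∈ A := hPA.closed y x hyA.1 hyA.2 hxS hadj.symm
        refine ⟨0, ⟨hxA', hyA.1⟩, fun j hj => ?_⟩
        rcases Fin.eq_zero_or_eq_succ j with rfl | ⟨i, rfl⟩
        · rfl
        · simp only [Fin.cons_succ] at hj
          exact absurd hyA (hsub' i hj.2).2
      · have hxB : x ∈ B := ⟨hxS, hxA⟩
        have hyB : y ∈ B := ⟨hyS, hyA⟩
        obtain ⟨i, hi, huniq⟩ := hedge' x y hadj hxB hyB
        refine ⟨i.succ, by simpa only [Fin.cons_succ] using hi, fun j hj => ?_⟩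
        rcases Fin.eq_zero_or_eq_succ j with rfl | ⟨i', rfl⟩
        · simp only [Fin.cons_zero] at hj
          exfalso
          have hxv : x = v := by
            by_contra h; exact hxA ⟨hj.1, h⟩
          have hyv : y = v := by
            by_contra h; exact hyA ⟨hj.2, h⟩
          exact hadj.ne (hxv.trans hyv.symm)
        · simp only [Fin.cons_succ] at hj
          exact congrArg Fin.succ (huniq i' hj)

lemma coe_induce_top (A : Set V) :
    ((⊤ : G.Subgraph).induce A).coe = G.induce A := by
  ext a b
  simp only [Subgraph.coe_adj, Subgraph.induce_adj, Subgraph.top_adj, comap_adj,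
    Function.Embedding.coe_subtype]
  exact ⟨fun h => h.2.2, fun h => ⟨a.2, b.2, h⟩⟩

lemma isTree_coe_induce_top (hG : G.IsAcyclic) {A : Set V} {v : V} (hv : v ∈ A)
    (hconn : ∀ x ∈ A, ReachIn G A v x) : ((⊤ : G.Subgraph).induce A).coe.IsTree := by
  rw [coe_induce_top]
  constructor
  · exact connected_induce_of_reachIn hv hconn
  · intro a c hc
    exact hG ((c.map (Embedding.induce A).toHom)) (hc.map Subtype.val_injective)

lemma conv [Fintype V] (hG : G.IsTree) (s : ℕ) (p : ℕ) (A : Fin p → Set V)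
    (hconn : ∀ j, ∃ v ∈ A j, ∀ x ∈ A j, ReachIn G (A j) v x)
    (hsz : ∀ j, s ≤ (A j).ncard ∧ (A j).ncard < 3 * s)
    (hedge : ∀ x y, G.Adj x y → ∃! j, x ∈ A j ∧ y ∈ A j) :
    ∃ (p : ℕ) (T : Fin p → G.Subgraph),
      (∀ j, (T j).coe.IsTree) ∧
      (∀ e ∈ G.edgeSet, ∃! j, e ∈ (T j).edgeSet) ∧
      (∀ j, s ≤ (T j).verts.ncard ∧ (T j).verts.ncard < 3 * s) := by
  refine ⟨p, fun j => (⊤ : G.Subgraph).induce (A j), ?_, ?_, ?_⟩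
  · intro j
    obtain ⟨v, hv, hc⟩ := hconn j
    exact isTree_coe_induce_top hG.2 hv hc
  · intro e he
    induction e with
    | h x y =>
      rw [mem_edgeSet] at he
      obtain ⟨j, hj, huniq⟩ := hedge x y he
      refine ⟨j, ?_, fun j' hj' => ?_⟩
      · show s(x, y) ∈ ((⊤ : G.Subgraph).induce (A j)).edgeSet
        rw [Subgraph.mem_edgeSet, Subgraph.induce_adj]
        exact ⟨hj.1, hj.2, he⟩
      · have hj'' : s(x, y) ∈ ((⊤ : G.Subgraph).induce (A j')).edgeSet := hj'
        rw [Subgraph.mem_edgeSet, Subgraph.induce_adj] at hj''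
        exact huniq j' ⟨hj''.1, hj''.2.1⟩
  · intro j
    exact hsz j


lemma edge_part {e : Sym2 V} (he : e ∈ G.edgeSet) :
    (∃ v ∈ {z | z ∈ e}, ∀ x ∈ {z | z ∈ e}, ReachIn G {z | z ∈ e} v x) ∧
      ({z | z ∈ e} : Set V).ncard = 2 := by
  induction e with
  | h x y =>
    rw [mem_edgeSet] at he
    have hD : ({z | z ∈ s(x, y)} : Set V) = {x, y} := by
      ext z; simp [Sym2.mem_iff]
    rw [hD]
    refine ⟨⟨x, by simp, ?_⟩, Set.ncard_pair he.ne⟩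
    intro z hz
    rcases hz with rfl | rfl
    · exact ReachIn.refl (by simp)
    · exact ⟨Walk.cons he Walk.nil, by simp⟩

end TreePartitionAux

open TreePartitionAux in
/-- Tree partition: a finite tree with `n ≥ 2` vertices can be partitioned into
edge-disjoint subtrees (connected subgraphs) `T₁, …, T_p` such that every edge of
`T` lies in exactly one subtree and each subtree has between `s` and `3s − 1` vertices. -/
theorem tree_partition {V : Type*} [Fintype V] (G : SimpleGraph V)
    (hG : G.IsTree) (n s : ℕ) (hn : n = Fintype.card V) (hn2 : 2 ≤ n)
    (hs1 : 1 ≤ s) (hsn : s ≤ n) :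
    ∃ (p : ℕ) (T : Fin p → G.Subgraph),
      (∀ j, (T j).coe.IsTree) ∧
      (∀ e ∈ G.edgeSet, ∃! j, e ∈ (T j).edgeSet) ∧
      (∀ j, s ≤ (T j).verts.ncard ∧ (T j).verts.ncard < 3 * s) := by
  have : DecidableEq V := Classical.decEq V
  rcases eq_or_lt_of_le hs1 with hs1' | hs2
  · -- s = 1 : one part per edge
    subst hn
    have hfin : Fintype ↥G.edgeSet := (G.edgeSet.toFinite).fintype
    set q := Fintype.card ↥G.edgeSet with hq
    set eqv : ↥G.edgeSet ≃ Fin q := Fintype.equivFin _ with heqv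
    refine conv hG s q (fun j => {z | z ∈ ((eqv.symm j : G.edgeSet) : Sym2 V)}) ?_ ?_ ?_
    · intro j; exact (edge_part (eqv.symm j).2).1
    · intro j
      have h2 := (edge_part (eqv.symm j).2).2
      rw [h2]; omega
    · intro x y hxy
      refine ⟨eqv ⟨s(x, y), hxy⟩, ?_, ?_⟩
      · simp [Equiv.symm_apply_apply]
      · intro j' hj'
        have he' : (↑(eqv.symm j') : Sym2 V) = s(x, y) :=
          (Sym2.mem_and_mem_iff hxy.ne).1 ⟨hj'.1, hj'.2⟩
        have : eqv.symm j' = ⟨s(x, y), hxy⟩ := Subtype.ext he'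
        rw [← this, Equiv.apply_symm_apply]
  · -- 2 ≤ s
    have hne : Nonempty V := by
      rw [← Fintype.card_pos_iff]; omega
    obtain ⟨v₀⟩ := hne
    have huniv : (Set.univ : Set V).ncard = Fintype.card V := by
      rw [Set.ncard_univ, Nat.card_eq_fintype_card]
    have hconnU : ∀ x ∈ (Set.univ : Set V), ReachIn G Set.univ v₀ x := by
      intro x _
      obtain ⟨w⟩ := hG.isConnected.preconnected v₀ x
      exact ⟨w, fun z _ => trivial⟩
    obtain ⟨p, A, h1, h2, h3, h4⟩ :=
      partition_aux hG s hs2 (Fintype.card V) Set.univ (le_of_eq huniv)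
        ⟨v₀, trivial, hconnU⟩ (by omega)
    exact conv hG s p A h1 h3 (fun x y hxy => h4 x y hxy trivial trivial)
end

section
/- Suppose (X, Y) is a frontier for Target(B, S) and Y is nonempty with min_{y ∈ Y} d[y] < B. Then the vertex y* ∈ Y attaining the minimum distance label in Y is complete, i.e., d[y*] = dis(y*); consequently d_B[Y] = dis_B(Y). -/
def Target {V : Type*} (dis : V → ℝ) (P : V → V → Prop) (B : ℝ) (S : Set V) : Set V :=
  {v | dis v < B ∧ ∃ u ∈ S, P v u}

def IsFrontier {V : Type*} (dis : V → ℝ) (P : V → V → Prop) (d : V → ℝ)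
    (B : ℝ) (S X Y : Set V) : Prop :=
  ∀ v ∈ Target dis P B S, (v ∈ X ∧ d v = dis v) ∨ ∃ y ∈ Y, P v y ∧ d y = dis y

/-- If `(X, Y)` is a frontier for `Target(B, S)` and `Y` is nonempty with minimum
label below `B`, then the vertex attaining the minimum label in `Y` is complete;
consequently `d_B[Y] = dis_B(Y)`. -/
theorem min_label_complete {V : Type*} [DecidableEq V]
    (dis : V → ℝ) (P : V → V → Prop) (d : V → ℝ) (B : ℝ) (S X : Set V)
    (Y : Finset V) (ystar : V)
    (hge : ∀ v, dis v ≤ d v)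
    (hmono : ∀ v u, P v u → dis u ≤ dis v)
    (hYsub : ↑Y ⊆ Target dis P B S)
    (hXsub : X ⊆ Target dis P B S)
    (hf : IsFrontier dis P d B S X ↑Y)
    (hy : ystar ∈ Y) (hmin : ∀ y ∈ Y, d ystar ≤ d y) (hlt : d ystar < B) :
    d ystar = dis ystar ∧
      (insert B (Y.image d)).min' (Finset.insert_nonempty _ _) =
        (insert B (Y.image dis)).min' (Finset.insert_nonempty _ _) := by
  -- completeness of ystar
  have hcomp : d ystar = dis ystar := by
    rcases hf ystar (hYsub hy) with ⟨_, h⟩ | ⟨y, hyY, hP, hdy⟩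
    · exact h
    · have h1 : dis y ≤ dis ystar := hmono _ _ hP
      have h2 : d ystar ≤ d y := hmin y hyY
      have := hge ystar
      linarith [hdy ▸ h2]
  refine ⟨hcomp, ?_⟩
  -- key: for all y ∈ Y, d ystar ≤ dis y
  have key : ∀ y ∈ Y, d ystar ≤ dis y := by
    intro y hyY
    rcases hf y (hYsub hyY) with ⟨_, h⟩ | ⟨y', hy'Y, hP, hdy'⟩
    · exact h ▸ hmin y hyY
    · have h1 : dis y' ≤ dis y := hmono _ _ hP
      have h2 : d ystar ≤ d y' := hmin y' hy'Y
      linarith [hdy' ▸ h2]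
  apply le_antisymm
  · apply Finset.le_min'
    intro b hb
    rcases Finset.mem_insert.mp hb with rfl | hb
    · exact Finset.min'_le _ _ (Finset.mem_insert_self _ _)
    · rcases Finset.mem_image.mp hb with ⟨y, hyY, rfl⟩
      calc (insert B (Y.image d)).min' _ ≤ d ystar :=
            Finset.min'_le _ _ (Finset.mem_insert_of_mem (Finset.mem_image_of_mem d hy))
        _ ≤ dis y := key y hyY
  · apply Finset.le_min'
    intro b hb
    rcases Finset.mem_insert.mp hb with rfl | hb
    · exact Finset.min'_le _ _ (Finset.mem_insert_self _ _)
    · rcases Finset.mem_image.mp hb with ⟨y, hyY, rfl⟩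
      calc (insert B (Y.image dis)).min' _ ≤ dis ystar :=
            Finset.min'_le _ _ (Finset.mem_insert_of_mem (Finset.mem_image_of_mem dis hy))
        _ = d ystar := hcomp.symm
        _ ≤ d y := hmin y hyY
end

section
/- Suppose (X, Y) is a frontier for Target(B, S), where Y ⊆ Target(B, S). Then Target(B, Y) ⊆ Target(B, S). -/
/-- If `(X, Y)` is a frontier for `Target(B, S)` (so `Y ⊆ Target(B, S)`), then
`Target(B, Y) ⊆ Target(B, S)`.  `Ptrans` is the prefix property of canonical
shortest paths. -/
theorem target_subset {V : Type*} (dis : V → ℝ) (P : V → V → Prop) (d : V → ℝ)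
    (B : ℝ) (S X Y : Set V)
    (Ptrans : ∀ v y u, P v y → P y u → P v u)
    (hY : Y ⊆ Target dis P B S)
    (hf : IsFrontier dis P d B S X Y) :
    Target dis P B Y ⊆ Target dis P B S := by
  rintro v ⟨hv, y, hyY, hvy⟩
  obtain ⟨_, u, huS, hyu⟩ := hY hyY
  exact ⟨hv, u, huS, Ptrans v y u hvy hyu⟩
end

section
/- Suppose (X, Y) is a frontier for Target(B, S). Then (∅, Y) is a frontier for Target(B, Y). -/
/-- If `(X, Y)` is a frontier for `Target(B, S)`, then `(∅, Y)` is a frontier for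
`Target(B, Y)`.  `Ptrans` is the prefix property; `hprop` says completeness
propagates to vertices visited by the shortest path of a complete vertex. -/
theorem frontier_restrict {V : Type*} (dis : V → ℝ) (P : V → V → Prop) (d : V → ℝ)
    (B : ℝ) (S X Y : Set V)
    (hge : ∀ v, dis v ≤ d v)
    (Ptrans : ∀ v y u, P v y → P y u → P v u)
    (hprop : ∀ v y, d v = dis v → P v y → d y = dis y)
    (hY : Y ⊆ Target dis P B S)
    (hf : IsFrontier dis P d B S X Y) :
    IsFrontier dis P d B Y (∅ : Set V) Y := by
  rintro v ⟨hvB, u, huY, hvu⟩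
  obtain ⟨huB, s, hsS, hus⟩ := hY huY
  have hvT : v ∈ Target dis P B S := ⟨hvB, s, hsS, Ptrans v u s hvu hus⟩
  rcases hf v hvT with ⟨_, hvd⟩ | ⟨y, hyY, hPy, hyd⟩
  · exact Or.inr ⟨u, huY, hvu, hprop v u hvd hvu⟩
  · exact Or.inr ⟨y, hyY, hPy, hyd⟩
end

section
/- Suppose (X, Y) is a frontier for Target(B, S). Then Target(d_B[Y], S) ⊆ X, and every vertex of Target(d_B[Y], S) is complete. -/
/-- If `(X, Y)` is a frontier for `Target(B, S)` then, with
`B' = d_B[Y] = min({B} ∪ {d[x] : x ∈ Y})`, every vertex of `Target(B', S)` lies in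
`X` and is complete. -/
theorem target_below_min_complete {V : Type*} [DecidableEq V]
    (dis : V → ℝ) (P : V → V → Prop) (d : V → ℝ) (B : ℝ) (S X : Set V)
    (Y : Finset V)
    (hge : ∀ v, dis v ≤ d v)
    (hmono : ∀ v u, P v u → dis u ≤ dis v)
    (hf : IsFrontier dis P d B S X ↑Y) :
    ∀ v ∈ Target dis P
        ((insert B (Y.image d)).min' (Finset.insert_nonempty _ _)) S,
      v ∈ X ∧ d v = dis v := by
  intro v hv
  obtain ⟨hlt, u, hu, hPu⟩ := hv
  have hBle : (insert B (Y.image d)).min' (Finset.insert_nonempty _ _) ≤ B :=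
    Finset.min'_le _ _ (Finset.mem_insert_self _ _)
  have hvB : v ∈ Target dis P B S := ⟨lt_of_lt_of_le hlt hBle, u, hu, hPu⟩
  rcases hf v hvB with h | ⟨y, hy, hPy, hdy⟩
  · exact h
  · exfalso
    have h1 : (insert B (Y.image d)).min' (Finset.insert_nonempty _ _) ≤ d y :=
      Finset.min'_le _ _ (Finset.mem_insert_of_mem (Finset.mem_image_of_mem d hy))
    have h2 : dis y ≤ dis v := hmono v y hPy
    linarith [hdy ▸ h1]
end

section
/- (Frontier Split) Suppose (X, Y) is a frontier for Target(B, S). Let B_s ≤ B and let Y_s satisfy {x ∈ Y : d[x] < B_s} ⊆ Y_s ⊆ Target(B, S). Then (∅, Y_s) is a frontier for Target(B_s, Y_s). -/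
/-- Frontier Split: if `(X, Y)` is a frontier for `Target(B, S)`, `B_s ≤ B`, and
`{x ∈ Y : d[x] < B_s} ⊆ Y_s ⊆ Target(B, S)`, then `(∅, Y_s)` is a frontier for
`Target(B_s, Y_s)`. -/
theorem frontier_split {V : Type*} (dis : V → ℝ) (P : V → V → Prop) (d : V → ℝ)
    (B Bs : ℝ) (S X Y Ys : Set V)
    (hge : ∀ v, dis v ≤ d v)
    (Ptrans : ∀ v y u, P v y → P y u → P v u)
    (hmono : ∀ v u, P v u → dis u ≤ dis v)
    (hBs : Bs ≤ B)
    (hsub : {x ∈ Y | d x < Bs} ⊆ Ys)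
    (hYs : Ys ⊆ Target dis P B S)
    (hf : IsFrontier dis P d B S X Y) :
    IsFrontier dis P d Bs Ys (∅ : Set V) Ys := by
  rintro v ⟨hvBs, u, huYs, hPvu⟩
  right
  have huT := hYs huYs
  have hduv : dis u ≤ dis v := hmono v u hPvu
  rcases hf u huT with ⟨_, hdu⟩ | ⟨y, hyY, hPuy, hdy⟩
  · exact ⟨u, huYs, hPvu, hdu⟩
  · refine ⟨y, hsub ⟨hyY, ?_⟩, Ptrans v u y hPvu hPuy, hdy⟩
    calc d y = dis y := hdy
      _ ≤ dis u := hmono u y hPuy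
      _ ≤ dis v := hduv
      _ < Bs := hvBs
end

section
/- Let U be a finite vertex set partitioned into disjoint nonempty sets U_1, ..., U_f. Let F_1, ..., F_p be edge-disjoint subtrees (as undirected trees) whose vertex sets are contained in U. For each j, let g_j be the number of distinct indices i such that U_i contains at least one vertex of F_j that is charged (at most one charged vertex per (j, i) pair). Let 𝓔 be the set of edges of ∪_j F_j joining two vertices lying in different parts U_i. Then Σ_{j=1}^p g_j ≤ p + |𝓔|. -/
/-- In a finite connected graph, the number of distinct colors is at most
`1 +` the number of bichromatic edges. -/
lemma color_bound_aux {V : Type*} [Finite V] {G : SimpleGraph V} (hG : G.Connected)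
    {f : ℕ} (c : V → Fin f) :
    {i : Fin f | ∃ v, c v = i}.ncard ≤
      1 + {e | e ∈ G.edgeSet ∧ ∃ a b, e = s(a, b) ∧ c a ≠ c b}.ncard := by
  classical
  obtain ⟨v0⟩ := hG.nonempty
  set S : Set (Fin f) := {i | ∃ v, c v = i} with hS
  set T : Set (Sym2 V) := {e | e ∈ G.edgeSet ∧ ∃ a b, e = s(a, b) ∧ c a ≠ c b} with hT
  set d : Fin f → ℕ := fun i => sInf ((fun v => G.dist v v0) '' {v | c v = i}) with hd
  have hdle : ∀ i, ∀ w : V, c w = i → d i ≤ G.dist w v0 := by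
    intro i w hw
    exact Nat.sInf_le ⟨w, hw, rfl⟩
  have key : ∀ i ∈ S \ {c v0}, ∃ a b : V, G.Adj a b ∧ c a = i ∧
      G.dist a v0 = d i ∧ G.dist b v0 < d i := by
    rintro i ⟨⟨v, hv⟩, hi0⟩
    have hne : ((fun v => G.dist v v0) '' {v | c v = i}).Nonempty := ⟨_, ⟨v, hv, rfl⟩⟩
    obtain ⟨a, ha, hda⟩ := Nat.sInf_mem hne
    have hav0 : a ≠ v0 := by
      rintro rfl
      exact hi0 (ha ▸ rfl)
    have hpos : 0 < G.dist a v0 := hG.pos_dist_of_ne hav0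
    obtain ⟨p, hp⟩ := hG.exists_walk_length_eq_dist a v0
    cases p with
    | nil => simp [← hp] at hpos
    | @cons _ b _ hadj q =>
      have hda' : G.dist a v0 = d i := hda
      refine ⟨a, b, hadj, ha, hda', ?_⟩
      have h1 : G.dist b v0 ≤ q.length := SimpleGraph.dist_le q
      have h2 : q.length + 1 = G.dist a v0 := by simpa using hp
      omega
  choose A B hadj hcA hdA hdB using key
  have hTfin : T.Finite := Set.toFinite T
  have hmap : ∀ i (h : i ∈ S \ {c v0}), s(A i h, B i h) ∈ T := by
    intro i h
    refine ⟨(hadj i h), A i h, B i h, rfl, ?_⟩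
    rw [hcA i h]
    intro hiB
    exact absurd (hdle i _ hiB.symm) (by have := hdB i h; omega)
  have hcard : (S \ {c v0}).ncard ≤ T.ncard := by
    refine Set.ncard_le_ncard_of_injOn
      (fun i => if h : i ∈ S \ {c v0} then s(A i h, B i h) else s(v0, v0))
      (fun i h => by simpa [h] using hmap i h) ?_ hTfin
    intro i hi j hj hij
    simp only [dif_pos hi, dif_pos hj, Sym2.eq_iff] at hij
    rcases hij with ⟨h1, h2⟩ | ⟨h1, h2⟩
    · rw [← hcA i hi, ← hcA j hj, h1]
    · exfalso
      have e1 : G.dist (A i hi) v0 < d j := h1 ▸ hdB j hj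
      have e2 : G.dist (A j hj) v0 < d i := h2 ▸ hdB i hi
      have := hdA i hi; have := hdA j hj
      omega
  calc S.ncard ≤ (insert (c v0) (S \ {c v0})).ncard := by
        refine Set.ncard_le_ncard (fun i hi => ?_) (Set.toFinite _)
        by_cases h : i = c v0
        · exact h ▸ Set.mem_insert _ _
        · exact Set.mem_insert_of_mem _ ⟨hi, h⟩
    _ ≤ (S \ {c v0}).ncard + 1 := Set.ncard_insert_le _ _
    _ ≤ 1 + T.ncard := by omega

/-- Let the vertex set be partitioned by `part : V → Fin f`, let `F₁, …, F_p` be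
edge-disjoint subtrees, let `g j` be the number of parts containing a charged
vertex of `F j` (at most one charged vertex per pair), and let `𝓔` be the set of
edges of `⋃ F j` joining two different parts.  Then `Σ g j ≤ p + |𝓔|`. -/
theorem charged_parts_bound {V : Type*} [Fintype V] {f p : ℕ}
    (G : SimpleGraph V) (F : Fin p → G.Subgraph)
    (htree : ∀ j, (F j).coe.IsTree)
    (hdisj : ∀ j j', j ≠ j' → Disjoint (F j).edgeSet (F j').edgeSet)
    (part : V → Fin f)
    (ch : Fin p → V → Prop)
    (hch : ∀ j, ∀ v ∈ (F j).verts, ∀ v' ∈ (F j).verts,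
      ch j v → ch j v' → part v = part v' → v = v')
    (g : Fin p → ℕ)
    (hg : ∀ j, g j = {i : Fin f | ∃ v ∈ (F j).verts, ch j v ∧ part v = i}.ncard)
    (𝓔 : Set (Sym2 V))
    (h𝓔 : 𝓔 = {e | (∃ j, e ∈ (F j).edgeSet) ∧ ∃ a b, e = s(a, b) ∧ part a ≠ part b}) :
    ∑ j, g j ≤ p + 𝓔.ncard := by
  classical
  set E' : Fin p → Set (Sym2 V) := fun j => 𝓔 ∩ (F j).edgeSet with hE'
  have hjbound : ∀ j, g j ≤ 1 + (E' j).ncard := by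
    intro j
    have hconn : (F j).coe.Connected := (htree j).isConnected
    set c : (F j).verts → Fin f := fun v => part v.val with hc
    have h1 : g j ≤ {i : Fin f | ∃ v, c v = i}.ncard := by
      rw [hg j]
      refine Set.ncard_le_ncard ?_ (Set.toFinite _)
      rintro i ⟨v, hv, _, hpi⟩
      exact ⟨⟨v, hv⟩, hpi⟩
    have h2 := color_bound_aux hconn c
    -- map bichromatic edges of the coe graph into E' j
    have h3 : {e | e ∈ (F j).coe.edgeSet ∧ ∃ a b, e = s(a, b) ∧ c a ≠ c b}.ncard ≤
        (E' j).ncard := by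
      refine Set.ncard_le_ncard_of_injOn (Sym2.map Subtype.val) ?_
        ((Sym2.map.injective Subtype.val_injective).injOn) (Set.toFinite _)
      rintro e ⟨he, a, b, rfl, hab⟩
      have hadj : (F j).Adj a.val b.val := he
      refine ⟨?_, SimpleGraph.Subgraph.mem_edgeSet.mpr hadj⟩
      rw [h𝓔]
      exact ⟨⟨j, SimpleGraph.Subgraph.mem_edgeSet.mpr hadj⟩, a.val, b.val, rfl, hab⟩
    omega
  have hsum : ∑ j, (E' j).ncard ≤ 𝓔.ncard := by
    have hfin : ∀ j, (E' j).Finite := fun j => Set.toFinite _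
    have h𝓔fin : 𝓔.Finite := Set.toFinite _
    calc ∑ j, (E' j).ncard = ∑ j, ((hfin j).toFinset).card := by
          exact Finset.sum_congr rfl (fun j _ => Set.ncard_eq_toFinset_card _ (hfin j))
      _ = (Finset.univ.biUnion fun j => (hfin j).toFinset).card := by
          refine (Finset.card_biUnion ?_).symm
          intro j _ j' _ hjj'
          simp only [Finset.disjoint_left, Set.Finite.mem_toFinset]
          rintro e ⟨_, he⟩ ⟨_, he'⟩
          exact (hdisj j j' hjj').le_bot ⟨he, he'⟩
      _ ≤ h𝓔fin.toFinset.card := by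
          refine Finset.card_le_card ?_
          intro e he
          simp only [Finset.mem_biUnion, Set.Finite.mem_toFinset] at he ⊢
          obtain ⟨j, _, he, _⟩ := he
          exact he
      _ = 𝓔.ncard := (Set.ncard_eq_toFinset_card _ h𝓔fin).symm
  calc ∑ j, g j ≤ ∑ j, (1 + (E' j).ncard) := Finset.sum_le_sum (fun j _ => hjbound j)
    _ = p + ∑ j, (E' j).ncard := by rw [Finset.sum_add_distrib]; simp
    _ ≤ p + 𝓔.ncard := by omega
end
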